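/- Assume only condition (a), i.e. e''Λe' = 0. Then for every left Λ-module N, the Λ-submodule e'N satisfies pd_Λ e'N = pd_{Λ'} e'N (both possibly infinite). -/

import Mathlib

universe u v

open Module

section Core

variable (R : Type u) [Ring R]

/-- The Jacobson radical of a ring, as a (left) ideal. -/
noncomputable def ringJac : Ideal R := (⊥ : Ideal R).jacobson

/-- `π : P → N` is a projective cover: `P` is projective, `π` is surjective and
its kernel is superfluous, i.e. contained in `rad(R)·P`. -/
def IsProjCover {P : Type v} {N : Type v} [AddCommGroup P] [Module R P]
    [AddCommGroup N] [Module R N] (π : P →ₗ[R] N) : Prop :=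
  Function.Surjective π ∧ Module.Projective R P ∧
    LinearMap.ker π ≤ (ringJac R) • (⊤ : Submodule R P)

/-- `X` is a first syzygy of `N`, i.e. isomorphic to the kernel of a projective cover of `N`. -/
def IsSyz1 (N : Type v) [AddCommGroup N] [Module R N]
    (X : Type v) [AddCommGroup X] [Module R X] : Prop :=
  ∃ (P : Type v) (_ : AddCommGroup P) (_ : Module R P) (π : P →ₗ[R] N),
    IsProjCover R π ∧ Nonempty (X ≃ₗ[R] LinearMap.ker π)

/-- `X` is an `n`-th syzygy of `N` (computed via projective covers); `Ω⁰(N) = N`. -/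
def IsSyz (n : ℕ) (N : Type v) [AddCommGroup N] [Module R N]
    (X : Type v) [AddCommGroup X] [Module R X] : Prop :=
  ∃ (M : Fin (n+1) → Type v) (_ : ∀ i, AddCommGroup (M i)) (_ : ∀ i, Module R (M i)),
    Nonempty (M 0 ≃ₗ[R] N) ∧ Nonempty (M (Fin.last n) ≃ₗ[R] X) ∧
    ∀ i : Fin n, IsSyz1 R (M i.castSucc) (M i.succ)

/-- Projective dimension of a module, as an element of `ℕ∞`
(the least `n` such that a minimal `n`-th syzygy is projective; `⊤` if none exists). -/
noncomputable def pdim (M : Type v) [AddCommGroup M] [Module R M] : ℕ∞ :=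
  sInf {d : ℕ∞ | ∃ n : ℕ, d = n ∧ ∃ (X : Type v) (_ : AddCommGroup X) (_ : Module R X),
    IsSyz R n M X ∧ Module.Projective R X}

/-- The little finitistic dimension of `R`: the supremum of the finite projective
dimensions attained on finitely generated left `R`-modules. -/
noncomputable def findim : ℕ∞ :=
  sSup {d : ℕ∞ | ∃ (M : Type u) (_ : AddCommGroup M) (_ : Module R M),
    Module.Finite R M ∧ pdim R M = d ∧ d ≠ ⊤}

/-- The big finitistic dimension of `R`: the supremum of the finite projective
dimensions attained on arbitrary left `R`-modules. -/
noncomputable def bigFindim : ℕ∞ :=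
  sSup {d : ℕ∞ | ∃ (M : Type u) (_ : AddCommGroup M) (_ : Module R M),
    pdim R M = d ∧ d ≠ ⊤}

/-- A primitive idempotent: a nonzero idempotent which is not the sum of two nonzero
orthogonal idempotents. -/
def IsPrimitiveIdem (e : R) : Prop :=
  IsIdempotentElem e ∧ e ≠ 0 ∧
    ∀ f g : R, IsIdempotentElem f → IsIdempotentElem g → f * g = 0 → g * f = 0 →
      f + g = e → f = 0 ∨ g = 0

/-- The top `M/JM` of a module. -/
noncomputable def topQuot (M : Type v) [AddCommGroup M] [Module R M] : Type v :=
  M ⧸ ((ringJac R) • (⊤ : Submodule R M))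

noncomputable instance topQuotAddCommGroup (M : Type v) [AddCommGroup M] [Module R M] :
    AddCommGroup (topQuot R M) :=
  inferInstanceAs (AddCommGroup (M ⧸ ((ringJac R) • (⊤ : Submodule R M))))

noncomputable instance topQuotModule (M : Type v) [AddCommGroup M] [Module R M] :
    Module R (topQuot R M) :=
  inferInstanceAs (Module R (M ⧸ ((ringJac R) • (⊤ : Submodule R M))))

end Core

section AlgCore

variable (K : Type u) [Field K] (Λ : Type u) [Ring Λ] [Algebra K Λ]

/-- The `K`-dimension (rank) of `e·(M/JM)`: the multiplicity of the top of `M` at the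
idempotent `e`. -/
noncomputable def eTopRank (e : Λ) (M : Type v) [AddCommGroup M] [Module Λ M] : Cardinal :=
  let _ : Module K (topQuot Λ M) := Module.compHom _ (algebraMap K Λ)
  Module.rank K ↥(Submodule.span K (Set.range (fun x : topQuot Λ M => e • x)))

/-- The `n`-generated finitistic dimension of the `K`-algebra `Λ`: the supremum of the
finite projective dimensions attained on finitely generated left `Λ`-modules whose top
multiplicities are all at most `n`. -/
noncomputable def findimN (n : ℕ) : ℕ∞ :=
  sSup {d : ℕ∞ | ∃ (M : Type u) (_ : AddCommGroup M) (_ : Module Λ M),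
    Module.Finite Λ M ∧ pdim Λ M = d ∧ d ≠ ⊤ ∧
    ∀ e : Λ, IsPrimitiveIdem Λ e → eTopRank K Λ e M ≤ n}

end AlgCore

section CornerDefs

variable {Λ : Type u} [Ring Λ]

/-- The corner ring `eΛe` attached to an idempotent `e` of `Λ`. -/
def Corner (e : Λ) (_ : IsIdempotentElem e) : Type u := {x : Λ // e * x = x ∧ x * e = x}

namespace Corner

variable {e : Λ} {he : IsIdempotentElem e}

instance : Zero (Corner e he) := ⟨⟨0, by simp⟩⟩
instance : Add (Corner e he) :=
  ⟨fun x y => ⟨x.1 + y.1, by rw [mul_add, x.2.1, y.2.1], by rw [add_mul, x.2.2, y.2.2]⟩⟩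
instance : Neg (Corner e he) :=
  ⟨fun x => ⟨-x.1, by rw [mul_neg, x.2.1], by rw [neg_mul, x.2.2]⟩⟩
instance : Mul (Corner e he) :=
  ⟨fun x y => ⟨x.1 * y.1, by rw [← mul_assoc, x.2.1], by rw [mul_assoc, y.2.2]⟩⟩
instance : One (Corner e he) := ⟨⟨e, he, he⟩⟩

instance instRing : Ring (Corner e he) :=
  Ring.ofMinimalAxioms
    (fun a b c => Subtype.ext (add_assoc a.1 b.1 c.1))
    (fun a => Subtype.ext (zero_add a.1))
    (fun a => Subtype.ext (neg_add_cancel a.1))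
    (fun a b c => Subtype.ext (mul_assoc a.1 b.1 c.1))
    (fun a => Subtype.ext a.2.1)
    (fun a => Subtype.ext a.2.2)
    (fun a b c => Subtype.ext (mul_add a.1 b.1 c.1))
    (fun a b c => Subtype.ext (add_mul a.1 b.1 c.1))

variable (K : Type u) [CommSemiring K] [Algebra K Λ]

instance : SMul K (Corner e he) :=
  ⟨fun k x => ⟨k • x.1, by rw [mul_smul_comm, x.2.1], by rw [smul_mul_assoc, x.2.2]⟩⟩

instance instModule : Module K (Corner e he) where
  one_smul x := Subtype.ext (one_smul K x.1)
  mul_smul a b x := Subtype.ext (mul_smul a b x.1)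
  smul_zero a := Subtype.ext (smul_zero a)
  smul_add a x y := Subtype.ext (smul_add a x.1 y.1)
  add_smul a b x := Subtype.ext (add_smul a b x.1)
  zero_smul x := Subtype.ext (zero_smul K x.1)

instance instAlgebra : Algebra K (Corner e he) :=
  Algebra.ofModule (fun k x y => Subtype.ext (smul_mul_assoc k x.1 y.1))
    (fun k x y => Subtype.ext (mul_smul_comm k x.1 y.1))

end Corner

/-- The `e`-component `eN` of a left `Λ`-module `N`, as an additive subgroup. -/
def cptSubgroup (e : Λ) (N : Type v) [AddCommGroup N] [Module Λ N] : AddSubgroup N where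
  carrier := {n | e • n = n}
  add_mem' := fun {a b} ha hb => by
    simp only [Set.mem_setOf_eq] at *; rw [smul_add, ha, hb]
  zero_mem' := smul_zero e
  neg_mem' := fun {a} ha => by
    simp only [Set.mem_setOf_eq] at *; rw [smul_neg, ha]

/-- The `e`-component `eN` of a left `Λ`-module `N`, as a type. -/
def Cpt (e : Λ) (N : Type v) [AddCommGroup N] [Module Λ N] : Type v := ↥(cptSubgroup e N)

instance (e : Λ) (N : Type v) [AddCommGroup N] [Module Λ N] : AddCommGroup (Cpt e N) :=
  inferInstanceAs (AddCommGroup ↥(cptSubgroup e N))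

instance {e : Λ} {he : IsIdempotentElem e} (N : Type v) [AddCommGroup N] [Module Λ N] :
    SMul (Corner e he) (Cpt e N) :=
  ⟨fun a n => ⟨a.1 • n.1, by show e • (a.1 • n.1) = a.1 • n.1; rw [smul_smul, a.2.1]⟩⟩

/-- `eN` is a left module over the corner ring `eΛe`. -/
instance cptModule {e : Λ} {he : IsIdempotentElem e} (N : Type v) [AddCommGroup N]
    [Module Λ N] : Module (Corner e he) (Cpt e N) where
  one_smul n := Subtype.ext (show e • n.1 = n.1 from n.2)
  mul_smul a b n := Subtype.ext (mul_smul a.1 b.1 n.1)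
  smul_zero a := Subtype.ext (smul_zero a.1)
  smul_add a x y := Subtype.ext (smul_add a.1 x.1 y.1)
  add_smul a b n := Subtype.ext (add_smul a.1 b.1 n.1)
  zero_smul n := Subtype.ext (zero_smul Λ n.1)

/-- A `Λ`-linear map restricts to a `eΛe`-linear map on `e`-components. -/
def cptMap {e : Λ} {he : IsIdempotentElem e} {Q N : Type v} [AddCommGroup Q] [Module Λ Q]
    [AddCommGroup N] [Module Λ N] (g : Q →ₗ[Λ] N) :
    Cpt e Q →ₗ[Corner e he] Cpt e N where
  toFun q := ⟨g q.1, show e • g q.1 = g q.1 by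
    rw [← map_smul, show e • q.1 = q.1 from q.2]⟩
  map_add' x y := Subtype.ext (map_add g x.1 y.1)
  map_smul' a q := Subtype.ext (map_smul g a.1 q.1)

/-- Under condition (a), `a ↦ e'ae'` is a ring homomorphism `Λ → e'Λe'`; restriction of
scalars along it realizes every `Λ'`-module as a `Λ`-module on which `e''` acts as zero. -/
def cornerHom (e' e'' : Λ) (he' : IsIdempotentElem e') (hsum : e' + e'' = 1)
    (hA : ∀ x : Λ, e'' * x * e' = 0) : Λ →+* Corner e' he' where
  toFun a := ⟨e' * a * e', by rw [← mul_assoc, ← mul_assoc, he'], by rw [mul_assoc, he']⟩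
  map_one' := Subtype.ext (show e' * 1 * e' = e' by rw [mul_one]; exact he')
  map_zero' := Subtype.ext (show e' * 0 * e' = 0 by rw [mul_zero, zero_mul])
  map_add' a b := Subtype.ext
    (show e' * (a + b) * e' = e' * a * e' + e' * b * e' by rw [mul_add, add_mul])
  map_mul' a b := Subtype.ext (by
    have key : ∀ x : Λ, e' * x * e' = x * e' := fun x => by
      have h1 : (e' + e'') * (x * e') = x * e' := by rw [hsum, one_mul]
      have h2 : e'' * (x * e') = 0 := by rw [← mul_assoc, hA x]
      calc e' * x * e' = e' * (x * e') := by rw [mul_assoc]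
        _ = (e' + e'') * (x * e') - e'' * (x * e') := by
            rw [add_mul, add_sub_cancel_right]
        _ = x * e' := by rw [h1, h2, sub_zero]
    show e' * (a * b) * e' = e' * a * e' * (e' * b * e')
    rw [key (a * b), key a, key b, mul_assoc a e' (b * e'), ← mul_assoc e' b e', key b,
      ← mul_assoc])

end CornerDefs


section MyJacLemmas

variable {R : Type} [Ring R]

lemma mem_ringJac_iff {x : R} : x ∈ ringJac R ↔ ∀ y : R, ∃ z : R, z * (y * x + 1) = 1 := by
  rw [ringJac, Ideal.mem_jacobson_iff]
  constructor
  · intro h y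
    obtain ⟨z, hz⟩ := h y
    refine ⟨z, ?_⟩
    rw [Ideal.mem_bot, sub_eq_zero] at hz
    rw [mul_add, mul_one, ← mul_assoc, hz]
  · intro h y
    obtain ⟨z, hz⟩ := h y
    refine ⟨z, ?_⟩
    rw [Ideal.mem_bot, sub_eq_zero]
    calc z * y * x + z = z * (y * x + 1) := by noncomm_ring
      _ = 1 := hz

/-- if `1 + a*b` has a left inverse then so does `1 + b*a`. -/
lemma leftinv_comm {a b : R} (h : ∃ z, z * (1 + a * b) = 1) :
    ∃ w, w * (1 + b * a) = 1 := by
  obtain ⟨z, hz⟩ := h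
  refine ⟨1 - b * z * a, ?_⟩
  have key : (1 - b * z * a) * (1 + b * a) = 1 + b * a - b * (z * (1 + a * b)) * a := by
    noncomm_ring
  rw [key, hz]
  noncomm_ring

lemma ringJac_mul_mem {x : R} (r : R) (hx : x ∈ ringJac R) : x * r ∈ ringJac R := by
  rw [mem_ringJac_iff] at hx ⊢
  intro y
  have h1 : ∃ z, z * (1 + r * (y * x)) = 1 := by
    obtain ⟨z, hz⟩ := hx (r * y)
    exact ⟨z, by rw [add_comm] at hz; rw [← mul_assoc]; exact hz⟩
  obtain ⟨w, hw⟩ := leftinv_comm h1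
  refine ⟨w, ?_⟩
  calc w * (y * (x * r) + 1) = w * (1 + (y * x) * r) := by noncomm_ring
    _ = 1 := hw

lemma ringJac_quasi_left {j : R} (hj : j ∈ ringJac R) : ∃ z, z * (1 - j) = 1 := by
  rw [mem_ringJac_iff] at hj
  obtain ⟨z, hz⟩ := hj (-1)
  exact ⟨z, by rw [neg_one_mul, neg_add_eq_sub] at hz; exact hz⟩

end MyJacLemmas

section CornerJac

variable {Λ : Type} [Ring Λ] {e' e'' : Λ} (he' : IsIdempotentElem e') (hsum : e' + e'' = 1)
  (hA : ∀ x : Λ, e'' * x * e' = 0)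

include he' hsum in
lemma idem_mul_comp : e' * e'' = 0 := by
  have h : e'' = 1 - e' := by rw [← hsum]; abel
  rw [h, mul_sub, mul_one, he'.eq, sub_self]

include he' hsum in
lemma comp_mul_idem : e'' * e' = 0 := by
  have h : e'' = 1 - e' := by rw [← hsum]; abel
  rw [h, sub_mul, one_mul, he'.eq, sub_self]

lemma phi_val (x : Corner e' he') : cornerHom e' e'' he' hsum hA x.1 = x := by
  refine Subtype.ext ?_
  show e' * x.1 * e' = x.1
  rw [x.2.1, x.2.2]

include he' hsum hA in
lemma eAe_eq_Ae (a : Λ) : e' * a * e' = a * e' := by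
  have h1 : (e' + e'') * (a * e') = a * e' := by rw [hsum, one_mul]
  have h2 : e'' * (a * e') = 0 := by rw [← mul_assoc, hA a]
  calc e' * a * e' = e' * (a * e') := by rw [mul_assoc]
    _ = (e' + e'') * (a * e') - e'' * (a * e') := by rw [add_mul, add_sub_cancel_right]
    _ = a * e' := by rw [h1, h2, sub_zero]

include hsum hA in
lemma phi_mul_val (a : Λ) (c : Corner e' he') :
    ((cornerHom e' e'' he' hsum hA a) * c).1 = a * c.1 := by
  show (e' * a * e') * c.1 = a * c.1
  rw [eAe_eq_Ae he' hsum hA, mul_assoc, c.2.1]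

include hsum in
lemma corner_jac_down (x : Corner e' he') (hx : x ∈ ringJac (Corner e' he')) :
    x.1 ∈ ringJac Λ := by
  rw [mem_ringJac_iff] at hx ⊢
  intro y
  set w : Corner e' he' := ⟨e' * y * e',
    by rw [← mul_assoc, ← mul_assoc, he'], by rw [mul_assoc, mul_assoc, he', ← mul_assoc]⟩
    with hw
  obtain ⟨u, hu⟩ := hx w
  have h1 : u.1 * ((e' * y * e') * x.1 + e') = e' := congrArg Subtype.val hu
  have hu2 : u.1 * e'' = 0 := by
    rw [← u.2.2, mul_assoc, idem_mul_comp he' hsum, mul_zero]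
  have he''w : e'' * (e' * y * e') = 0 := by
    rw [← mul_assoc, ← mul_assoc, comp_mul_idem he' hsum, zero_mul, zero_mul]
  have c1 : ∃ z, z * (1 + e' * (y * x.1)) = 1 := by
    refine ⟨u.1 + e'', ?_⟩
    have hx1 : (e' * y * e') * x.1 = e' * (y * x.1) := by
      rw [mul_assoc, mul_assoc, x.2.1, ← mul_assoc]
    rw [← hx1, ← hsum]
    have expand : (u.1 + e'') * ((e' + e'') + (e' * y * e') * x.1) =
        u.1 * ((e' * y * e') * x.1 + e') + u.1 * e'' + e'' * e' + e'' * e'' +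
          (e'' * (e' * y * e')) * x.1 := by noncomm_ring
    have he''2 : e'' * e'' = e'' := by
      have h0 : e'' * e' = 0 := comp_mul_idem he' hsum
      calc e'' * e'' = e'' * (e' + e'') - e'' * e' := by noncomm_ring
        _ = e'' := by rw [hsum, h0, mul_one, sub_zero]
    rw [expand, h1, hu2, comp_mul_idem he' hsum, he''2, he''w, zero_mul]
    abel
  obtain ⟨z, hz⟩ := leftinv_comm c1
  refine ⟨z, ?_⟩
  have : (y * x.1) * e' = y * x.1 := by rw [mul_assoc, x.2.2]
  rw [this] at hz
  rw [add_comm]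
  exact hz

include hsum in
lemma corner_jac_up (x : Corner e' he') (hx : x.1 ∈ ringJac Λ) :
    x ∈ ringJac (Corner e' he') := by
  rw [mem_ringJac_iff]
  intro y
  have haJ : y.1 * x.1 ∈ ringJac Λ := Ideal.mul_mem_left _ _ hx
  have hea : e' * (y.1 * x.1) = y.1 * x.1 := by rw [← mul_assoc, y.2.1]
  have hae : (y.1 * x.1) * e' = y.1 * x.1 := by rw [mul_assoc, x.2.2]
  obtain ⟨z, hz⟩ : ∃ z, z * (1 + y.1 * x.1) = 1 := by
    rw [mem_ringJac_iff] at haJ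
    obtain ⟨z, hz⟩ := haJ 1
    rw [one_mul, add_comm] at hz
    exact ⟨z, hz⟩
  refine ⟨⟨e' - e' * z * (y.1 * x.1), ?_, ?_⟩, ?_⟩
  · have k : e' * (e' - e' * z * (y.1 * x.1)) = e' * e' - (e' * e') * z * (y.1 * x.1) := by noncomm_ring
    rw [k, he'.eq]
  · have k : (e' - e' * z * (y.1 * x.1)) * e' = e' * e' - e' * z * ((y.1 * x.1) * e') := by noncomm_ring
    rw [k, he'.eq, hae]
  · refine Subtype.ext ?_
    show (e' - e' * z * (y.1 * x.1)) * (y.1 * x.1 + e') = e'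
    have k1 : (e' - e' * z * (y.1 * x.1)) * (y.1 * x.1 + e') =
        e' * (y.1 * x.1) + e' * e' - (e' * z) * ((y.1 * x.1) * (y.1 * x.1))
          - (e' * z) * ((y.1 * x.1) * e') := by noncomm_ring
    rw [k1, he'.eq, hae, hea]
    have k2 : y.1 * x.1 + e' - (e' * z) * ((y.1 * x.1) * (y.1 * x.1)) - (e' * z) * (y.1 * x.1) =
        e' + (y.1 * x.1 - (e' * (z * (1 + y.1 * x.1))) * (y.1 * x.1)) := by noncomm_ring
    rw [k2, hz, mul_one, hea]
    abel

end CornerJac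

section Nakayama

variable {R : Type} [Ring R] {M : Type} [AddCommGroup M] [Module R M]

lemma span_eq_bot_of_le_jacSmul (s : Finset M)
    (hle : Submodule.span R (s : Set M) ≤ ringJac R • Submodule.span R (s : Set M)) :
    Submodule.span R (s : Set M) = ⊥ := by
  classical
  induction s using Finset.induction_on with
  | empty => simp
  | @insert x t hxt ih =>
    rw [Finset.coe_insert] at hle ⊢
    have hx' : x ∈ Submodule.span R (insert x (t : Set M)) :=
      Submodule.subset_span (Set.mem_insert x _)
    have hmem := hle hx'
    rw [Submodule.span_insert, Submodule.smul_sup] at hmem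
    obtain ⟨v, hv, u, hu, hvu⟩ := Submodule.mem_sup.1 hmem
    have hvj : ∃ j ∈ ringJac R, v = j • x := by
      refine Submodule.smul_induction_on hv ?_ ?_
      · intro r hr n hn
        obtain ⟨c, hc⟩ := Submodule.mem_span_singleton.1 hn
        exact ⟨r * c, ringJac_mul_mem c hr, by rw [← hc, smul_smul]⟩
      · rintro a b ⟨j1, hj1, rfl⟩ ⟨j2, hj2, rfl⟩
        exact ⟨j1 + j2, add_mem hj1 hj2, (add_smul j1 j2 x).symm⟩
    obtain ⟨j, hj, rfl⟩ := hvj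
    have hux : (1 - j) • x = u := by
      rw [sub_smul, one_smul]
      exact (eq_sub_of_add_eq' hvu).symm
    obtain ⟨z, hz⟩ := ringJac_quasi_left hj
    have hxu : x = z • u := by
      rw [← hux, smul_smul, hz, one_smul]
    have hxt' : x ∈ Submodule.span R (t : Set M) := by
      rw [hxu]
      exact Submodule.smul_le_right (Submodule.smul_mem _ z hu)
    have hspan : Submodule.span R (insert x (t : Set M)) = Submodule.span R (t : Set M) :=
      Submodule.span_insert_eq_span hxt'
    rw [hspan] at hle ⊢
    exact ih hle

lemma nakayama_fg (N : Submodule R M) (hfg : N.FG) (h : N ≤ ringJac R • N) : N = ⊥ := by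
  obtain ⟨s, hs⟩ := hfg
  rw [← hs] at h ⊢
  exact span_eq_bot_of_le_jacSmul s h

end Nakayama

noncomputable def jpow (R : Type) [Ring R] : ℕ → Ideal R
  | 0 => ⊤
  | n+1 => ringJac R • jpow R n

noncomputable def radpow (R : Type) [Ring R] (M : Type) [AddCommGroup M] [Module R M] : ℕ → Submodule R M
  | 0 => ⊤
  | n+1 => ringJac R • radpow R M n

section Nilpotent

variable (K : Type) [Field K] (Λ : Type) [Ring Λ] [Algebra K Λ] [FiniteDimensional K Λ]

include K in
lemma exists_jpow_bot : ∃ n, jpow Λ n = ⊥ := by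
  have hNoeth : IsNoetherian Λ Λ := isNoetherian_of_tower K inferInstance
  set d : ℕ → ℕ := fun n => Module.finrank K (Submodule.restrictScalars K (jpow Λ n)) with hd
  have hle : ∀ n, jpow Λ (n+1) ≤ jpow Λ n := fun n => Submodule.smul_le_right
  have hstab : ∃ n, jpow Λ (n+1) = jpow Λ n := by
    by_contra hcon
    push_neg at hcon
    have hdlt : ∀ n, d (n+1) < d n := by
      intro n
      have hlt : Submodule.restrictScalars K (jpow Λ (n+1)) <
          Submodule.restrictScalars K (jpow Λ n) := by
        refine lt_of_le_of_ne (fun x hx => hle n hx) (fun h => hcon n ?_)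
        exact Submodule.restrictScalars_injective K Λ Λ h
      exact Submodule.finrank_lt_finrank_of_lt hlt
    have hsum : ∀ n, d n + n ≤ d 0 := by
      intro n
      induction n with
      | zero => simp
      | succ k ihk => have := hdlt k; omega
    have := hsum (d 0 + 1)
    omega
  obtain ⟨n, hn⟩ := hstab
  exact ⟨n, nakayama_fg _ (IsNoetherian.noetherian _) (le_of_eq hn.symm)⟩

variable (M : Type) [AddCommGroup M] [Module Λ M]

lemma radpow_le_jpow_smul : ∀ n, radpow Λ M n ≤ jpow Λ n • (⊤ : Submodule Λ M) := by
  intro n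
  induction n with
  | zero => rw [show jpow Λ 0 = ⊤ from rfl, Submodule.top_smul]; exact le_top
  | succ k ihk =>
    calc radpow Λ M (k+1) = ringJac Λ • radpow Λ M k := rfl
      _ ≤ ringJac Λ • (jpow Λ k • ⊤) := smul_mono_right _ ihk
      _ = (ringJac Λ • jpow Λ k) • ⊤ := (Submodule.smul_assoc _ _ _).symm
      _ = jpow Λ (k+1) • ⊤ := rfl

include K in
lemma exists_radpow_bot : ∃ n, radpow Λ M n = ⊥ := by
  obtain ⟨n, hn⟩ := exists_jpow_bot K Λ
  refine ⟨n, le_bot_iff.1 ?_⟩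
  calc radpow Λ M n ≤ jpow Λ n • ⊤ := radpow_le_jpow_smul Λ M n
    _ = (⊥ : Ideal Λ) • ⊤ := by rw [hn]
    _ = ⊥ := Submodule.bot_smul ⊤

end Nilpotent

section Compat

variable {Λ : Type} [Ring Λ] (e' e'' : Λ) (he' : IsIdempotentElem e') (hsum : e' + e'' = 1)
  (hA : ∀ x : Λ, e'' * x * e' = 0)

/-- Compatibility of a `Λ`-module structure and a `Λ' = e'Λe'`-module structure on the
same abelian group: the `Λ`-action factors through the corner projection. -/
def Compat (M : Type) [AddCommGroup M] [Module Λ M] [Module (Corner e' he') M] : Prop :=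
  ∀ (a : Λ) (m : M), a • m = (cornerHom e' e'' he' hsum hA a) • m

variable {M : Type} [AddCommGroup M] [Module Λ M]

lemma compat_val [Module (Corner e' he') M] (hc : Compat e' e'' he' hsum hA M)
    (x : Corner e' he') (m : M) : x.1 • m = x • m := by
  rw [hc x.1 m, phi_val]

include hsum hA in
lemma compat_good [Module (Corner e' he') M] (hc : Compat e' e'' he' hsum hA M)
    (m : M) : e'' • m = 0 := by
  rw [hc e'' m]
  have h0 : cornerHom e' e'' he' hsum hA e'' = 0 := by
    refine Subtype.ext ?_
    show e' * e'' * e' = 0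
    rw [idem_mul_comp he' hsum, zero_mul]
  rw [h0, zero_smul]

include hsum in
lemma good_e'_smul (hg : ∀ m : M, e'' • m = 0) (m : M) : e' • m = m := by
  have h1 : (1 : Λ) • m = m := one_smul Λ m
  rw [← hsum, add_smul, hg m, add_zero] at h1
  exact h1

/-- A `Λ`-module killed by `e''` is a module over the corner ring `e'Λe'`. -/
def goodModule (hg : ∀ m : M, e'' • m = 0) : Module (Corner e' he') M where
  smul x m := x.1 • m
  one_smul m := good_e'_smul e' e'' hsum hg m
  mul_smul x y m := mul_smul x.1 y.1 m
  smul_zero x := smul_zero x.1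
  smul_add x a b := smul_add x.1 a b
  add_smul x y m := add_smul x.1 y.1 m
  zero_smul m := zero_smul Λ m

lemma goodModule_compat (hg : ∀ m : M, e'' • m = 0) :
    @Compat Λ _ e' e'' he' hsum hA M _ _ (goodModule e' e'' he' hsum hg) := by
  intro a m
  have h1 : e' • m = m := good_e'_smul e' e'' hsum hg m
  show a • m = (e' * a * e') • m
  calc a • m = a • (e' • m) := by rw [h1]
    _ = (a * e') • m := (mul_smul a e' m).symm
    _ = (e' * a * e') • m := by rw [eAe_eq_Ae he' hsum hA a]

lemma good_submodule (hg : ∀ m : M, e'' • m = 0) (p : Submodule Λ M) :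
    ∀ x : ↥p, e'' • x = 0 := fun x => Subtype.ext (hg x.1)

lemma good_of_equiv {B : Type} [AddCommGroup B] [Module Λ B] (f : M ≃ₗ[Λ] B)
    (hg : ∀ m : M, e'' • m = 0) : ∀ b : B, e'' • b = 0 := by
  intro b
  calc e'' • b = f (f.symm (e'' • b)) := (f.apply_symm_apply _).symm
    _ = f (e'' • f.symm b) := by rw [map_smul]
    _ = f 0 := by rw [hg]
    _ = 0 := map_zero f

include hsum hA in
lemma good_of_rad (K : Type) [Field K] [Algebra K Λ] [FiniteDimensional K Λ]
    (he'' : IsIdempotentElem e'')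
    (hcond : ∀ m : M, e'' • m ∈ ringJac Λ • (⊤ : Submodule Λ M)) :
    ∀ m : M, e'' • m = 0 := by
  obtain ⟨n, hn⟩ := exists_radpow_bot K Λ M
  suffices h : ∀ k, ∀ m : M, e'' • m ∈ radpow Λ M k by
    intro m
    have := h n m
    rw [hn, Submodule.mem_bot] at this
    exact this
  intro k
  induction k with
  | zero => intro m; trivial
  | succ k ih =>
    intro m
    have h2 : e'' • m = e'' • (e'' • m) := by rw [smul_smul, he''.eq]
    rw [h2]
    have key : ∀ v ∈ ringJac Λ • (⊤ : Submodule Λ M), e'' • v ∈ radpow Λ M (k+1) := by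
      intro v hv
      refine Submodule.smul_induction_on hv (fun r hr q _ => ?_) (fun a b ha hb => ?_)
      · have hr' : e'' * r = (e'' * r) * e'' := by
          calc e'' * r = e'' * r * (e' + e'') := by rw [hsum, mul_one]
            _ = e'' * r * e' + e'' * r * e'' := by rw [mul_add]
            _ = (e'' * r) * e'' := by rw [hA r, zero_add]
        have hsw : e'' • (r • q) = (e'' * r) • (e'' • q) := by
          rw [smul_smul, smul_smul, ← hr']
        rw [hsw]
        exact Submodule.smul_mem_smul (Ideal.mul_mem_left _ e'' hr) (ih q)
      · rw [smul_add]
        exact add_mem ha hb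
    exact key _ (hcond m)

section TwoStructures

variable [Module (Corner e' he') M] (hc : Compat e' e'' he' hsum hA M)

include hc in
lemma projective_of_corner (h : Module.Projective (Corner e' he') M) :
    Module.Projective Λ M := by
  obtain ⟨s, hs⟩ := (Module.projective_def').1 h
  let σ : M →ₗ[Λ] (M →₀ Λ) :=
    { toFun := fun m => Finsupp.mapRange (fun c : Corner e' he' => (c.1 : Λ)) rfl (s m)
      map_add' := fun m n => by
        rw [map_add]
        exact Finsupp.mapRange_add (fun a b => rfl) _ _
      map_smul' := fun a m => by
        ext p
        simp only [RingHom.id_apply, Finsupp.mapRange_apply, Finsupp.smul_apply, smul_eq_mul]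
        rw [hc a m, map_smul, Finsupp.smul_apply]
        exact phi_mul_val he' hsum hA a _
    }
  refine Module.projective_def'.2 ⟨σ, LinearMap.ext fun m => ?_⟩
  have hm : Finsupp.linearCombination (Corner e' he') id (s m) = m := by
    have := LinearMap.ext_iff.1 hs m
    rwa [LinearMap.comp_apply, LinearMap.id_apply] at this
  rw [LinearMap.comp_apply, LinearMap.id_apply]
  show Finsupp.linearCombination Λ id
      (Finsupp.mapRange (fun c : Corner e' he' => (c.1 : Λ)) rfl (s m)) = m
  rw [Finsupp.linearCombination_apply]
  rw [Finsupp.sum_mapRange_index (fun a => zero_smul Λ (id a))]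
  calc ((s m).sum fun a b => (b.1 : Λ) • id a) = ((s m).sum fun a b => b • id a) :=
        Finsupp.sum_congr fun p _ => compat_val e' e'' he' hsum hA hc _ _
    _ = m := by rw [← Finsupp.linearCombination_apply]; exact hm

include hc in
lemma corner_of_projective (h : Module.Projective Λ M) :
    Module.Projective (Corner e' he') M := by
  obtain ⟨s, hs⟩ := (Module.projective_def').1 h
  let σ : M →ₗ[Corner e' he'] (M →₀ Corner e' he') :=
    { toFun := fun m =>
        Finsupp.mapRange (cornerHom e' e'' he' hsum hA) (map_zero _) (s m)
      map_add' := fun m n => by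
        rw [map_add]
        exact Finsupp.mapRange_add (map_add _) _ _
      map_smul' := fun x m => by
        ext p
        simp only [RingHom.id_apply, Finsupp.mapRange_apply, Finsupp.smul_apply]
        rw [← compat_val e' e'' he' hsum hA hc x m, map_smul, Finsupp.smul_apply]
        show (cornerHom e' e'' he' hsum hA) (x.1 * (s m p)) =
          x * (cornerHom e' e'' he' hsum hA) (s m p)
        rw [map_mul, phi_val]
    }
  refine Module.projective_def'.2 ⟨σ, LinearMap.ext fun m => ?_⟩
  have hm : Finsupp.linearCombination Λ id (s m) = m := by
    have := LinearMap.ext_iff.1 hs m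
    rwa [LinearMap.comp_apply, LinearMap.id_apply] at this
  rw [LinearMap.comp_apply, LinearMap.id_apply]
  show Finsupp.linearCombination (Corner e' he') id
      (Finsupp.mapRange (cornerHom e' e'' he' hsum hA) (map_zero _) (s m)) = m
  rw [Finsupp.linearCombination_apply]
  rw [Finsupp.sum_mapRange_index (fun a => zero_smul (Corner e' he') (id a))]
  calc ((s m).sum fun a b => (cornerHom e' e'' he' hsum hA b) • id a)
      = ((s m).sum fun a b => b • id a) :=
        Finsupp.sum_congr fun p _ => (hc _ _).symm
    _ = m := by rw [← Finsupp.linearCombination_apply]; exact hm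

include hc in
lemma rad_corner_to_ring {x : M}
    (hx : x ∈ ringJac (Corner e' he') • (⊤ : Submodule (Corner e' he') M)) :
    x ∈ ringJac Λ • (⊤ : Submodule Λ M) := by
  refine Submodule.smul_induction_on hx (fun r hr n _ => ?_) (fun a b ha hb => add_mem ha hb)
  rw [← compat_val e' e'' he' hsum hA hc r n]
  exact Submodule.smul_mem_smul (corner_jac_down he' hsum r hr) trivial

include hc in
lemma rad_ring_to_corner {x : M}
    (hx : x ∈ ringJac Λ • (⊤ : Submodule Λ M)) :
    x ∈ ringJac (Corner e' he') • (⊤ : Submodule (Corner e' he') M) := by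
  refine Submodule.smul_induction_on hx (fun r hr n _ => ?_) (fun a b ha hb => add_mem ha hb)
  rw [hc r n]
  refine Submodule.smul_mem_smul (corner_jac_up he' hsum _ ?_) trivial
  show e' * r * e' ∈ ringJac Λ
  exact ringJac_mul_mem e' (Ideal.mul_mem_left _ e' hr)

end TwoStructures

section Transfer

variable {A B : Type} [AddCommGroup A] [Module Λ A] [Module (Corner e' he') A]
  [AddCommGroup B] [Module Λ B] [Module (Corner e' he') B]

def ofCornerMap (hcA : Compat e' e'' he' hsum hA A) (hcB : Compat e' e'' he' hsum hA B)
    (f : A →ₗ[Corner e' he'] B) : A →ₗ[Λ] B where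
  toFun := f
  map_add' := f.map_add
  map_smul' := fun a m => by
    show f (a • m) = a • f m
    rw [hcA a m, hcB a (f m), map_smul]

def toCornerMap (hcA : Compat e' e'' he' hsum hA A) (hcB : Compat e' e'' he' hsum hA B)
    (f : A →ₗ[Λ] B) : A →ₗ[Corner e' he'] B where
  toFun := f
  map_add' := f.map_add
  map_smul' := fun x m => by
    show f (x • m) = x • f m
    rw [← compat_val e' e'' he' hsum hA hcA x m, ← compat_val e' e'' he' hsum hA hcB x (f m),
      map_smul]

def ofCornerEquiv (hcA : Compat e' e'' he' hsum hA A) (hcB : Compat e' e'' he' hsum hA B)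
    (f : A ≃ₗ[Corner e' he'] B) : A ≃ₗ[Λ] B :=
  { ofCornerMap e' e'' he' hsum hA hcA hcB f.toLinearMap with
    invFun := f.symm
    left_inv := f.left_inv
    right_inv := f.right_inv }

def toCornerEquiv (hcA : Compat e' e'' he' hsum hA A) (hcB : Compat e' e'' he' hsum hA B)
    (f : A ≃ₗ[Λ] B) : A ≃ₗ[Corner e' he'] B :=
  { toCornerMap e' e'' he' hsum hA hcA hcB f.toLinearMap with
    invFun := f.symm
    left_inv := f.left_inv
    right_inv := f.right_inv }

end Transfer

end Compat

section SyzygyTransfer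

variable {Λ : Type} [Ring Λ] (e' e'' : Λ) (he' : IsIdempotentElem e')
  (he'' : IsIdempotentElem e'') (hsum : e' + e'' = 1) (hA : ∀ x : Λ, e'' * x * e' = 0)
variable (K : Type) [Field K] [Algebra K Λ] [FiniteDimensional K Λ]

lemma isSyz1_of_corner {A B : Type} [AddCommGroup A] [Module Λ A] [Module (Corner e' he') A]
    [AddCommGroup B] [Module Λ B] [Module (Corner e' he') B]
    (hcA : Compat e' e'' he' hsum hA A) (hcB : Compat e' e'' he' hsum hA B)
    (h : IsSyz1 (Corner e' he') A B) : IsSyz1 Λ A B := by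
  obtain ⟨P, instPA, instPM, π, ⟨hsurj, hproj, hker⟩, ⟨f⟩⟩ := h
  letI instP : Module Λ P := Module.compHom P (cornerHom e' e'' he' hsum hA)
  have hcP : Compat e' e'' he' hsum hA P := fun a m => rfl
  let π' : P →ₗ[Λ] A := ofCornerMap e' e'' he' hsum hA hcP hcA π
  have hkerval : ∀ x : P, π' x = 0 ↔ π x = 0 := fun x => Iff.rfl
  refine ⟨P, instPA, instP, π',
    ⟨hsurj, projective_of_corner e' e'' he' hsum hA hcP hproj, ?_⟩, ?_⟩
  · intro x hx
    rw [LinearMap.mem_ker] at hx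
    exact rad_corner_to_ring e' e'' he' hsum hA hcP (hker (LinearMap.mem_ker.2 ((hkerval x).1 hx)))
  · letI instK : Module Λ ↥(LinearMap.ker π) := Module.compHom _ (cornerHom e' e'' he' hsum hA)
    have hcK : Compat e' e'' he' hsum hA ↥(LinearMap.ker π) := fun a m => rfl
    let g : B ≃ₗ[Λ] ↥(LinearMap.ker π) := ofCornerEquiv e' e'' he' hsum hA hcB hcK f
    let keq : ↥(LinearMap.ker π) ≃ₗ[Λ] ↥(LinearMap.ker π') :=
      { toFun := fun x => ⟨x.1, x.2⟩
        map_add' := fun x y => rfl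
        map_smul' := fun a x => rfl
        invFun := fun x => ⟨x.1, x.2⟩
        left_inv := fun x => rfl
        right_inv := fun x => rfl }
    exact ⟨g.trans keq⟩

include he' he'' hsum hA K in
lemma isSyz1_good {A B : Type} [AddCommGroup A] [Module Λ A] [AddCommGroup B] [Module Λ B]
    (hgA : ∀ a : A, e'' • a = 0) (h : IsSyz1 Λ A B) : ∀ b : B, e'' • b = 0 := by
  obtain ⟨P, instPA, instPM, π, ⟨hsurj, hproj, hker⟩, ⟨f⟩⟩ := h
  have hgP : ∀ p : P, e'' • p = 0 := by
    refine good_of_rad e' e'' hsum hA K he'' (fun p => hker ?_)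
    rw [LinearMap.mem_ker, map_smul]
    rw [hgA (π p)]
  exact good_of_equiv e'' f.symm (good_submodule e'' hgP _)

include he'' K in
lemma isSyz1_to_corner {A B : Type} [AddCommGroup A] [Module Λ A] [Module (Corner e' he') A]
    [AddCommGroup B] [Module Λ B] [Module (Corner e' he') B]
    (hcA : Compat e' e'' he' hsum hA A) (hcB : Compat e' e'' he' hsum hA B)
    (h : IsSyz1 Λ A B) : IsSyz1 (Corner e' he') A B := by
  obtain ⟨P, instPA, instPM, π, ⟨hsurj, hproj, hker⟩, ⟨f⟩⟩ := h
  have hgP : ∀ p : P, e'' • p = 0 := by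
    refine good_of_rad e' e'' hsum hA K he'' (fun p => hker ?_)
    rw [LinearMap.mem_ker, map_smul]
    rw [compat_good e' e'' he' hsum hA hcA (π p)]
  letI instP' : Module (Corner e' he') P := goodModule e' e'' he' hsum hgP
  have hcP : Compat e' e'' he' hsum hA P := goodModule_compat e' e'' he' hsum hA hgP
  let π' : P →ₗ[Corner e' he'] A := toCornerMap e' e'' he' hsum hA hcP hcA π
  have hkerval : ∀ x : P, π' x = 0 ↔ π x = 0 := fun x => Iff.rfl
  refine ⟨P, instPA, instP', π',
    ⟨hsurj, corner_of_projective e' e'' he' hsum hA hcP hproj, ?_⟩, ?_⟩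
  · intro x hx
    rw [LinearMap.mem_ker] at hx
    exact rad_ring_to_corner e' e'' he' hsum hA hcP (hker (LinearMap.mem_ker.2 ((hkerval x).1 hx)))
  · have hgK : ∀ x : ↥(LinearMap.ker π), e'' • x = 0 := good_submodule e'' hgP _
    letI instK' : Module (Corner e' he') ↥(LinearMap.ker π) :=
      goodModule e' e'' he' hsum hgK
    have hcK : Compat e' e'' he' hsum hA ↥(LinearMap.ker π) :=
      goodModule_compat e' e'' he' hsum hA hgK
    let g : B ≃ₗ[Corner e' he'] ↥(LinearMap.ker π) := toCornerEquiv e' e'' he' hsum hA hcB hcK f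
    let keq : ↥(LinearMap.ker π) ≃ₗ[Corner e' he'] ↥(LinearMap.ker π') :=
      { toFun := fun x => ⟨x.1, x.2⟩
        map_add' := fun x y => rfl
        map_smul' := fun a x => rfl
        invFun := fun x => ⟨x.1, x.2⟩
        left_inv := fun x => rfl
        right_inv := fun x => rfl }
    exact ⟨g.trans keq⟩

lemma isSyz_of_corner (n : ℕ) {N X : Type} [AddCommGroup N] [Module Λ N]
    [Module (Corner e' he') N] [AddCommGroup X] [Module Λ X] [Module (Corner e' he') X]
    (hcN : Compat e' e'' he' hsum hA N) (hcX : Compat e' e'' he' hsum hA X)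
    (h : IsSyz (Corner e' he') n N X) : IsSyz Λ n N X := by
  obtain ⟨M, instG, instM', h0, hl, hstep⟩ := h
  letI instM : ∀ i, Module Λ (M i) := fun i => Module.compHom _ (cornerHom e' e'' he' hsum hA)
  have hcM : ∀ i, Compat e' e'' he' hsum hA (M i) := fun i a m => rfl
  exact ⟨M, instG, instM,
    ⟨ofCornerEquiv e' e'' he' hsum hA (hcM 0) hcN h0.some⟩,
    ⟨ofCornerEquiv e' e'' he' hsum hA (hcM _) hcX hl.some⟩,
    fun i => isSyz1_of_corner e' e'' he' hsum hA (hcM _) (hcM _) (hstep i)⟩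

include he'' K in
lemma isSyz_to_corner (n : ℕ) {N X : Type} [AddCommGroup N] [Module Λ N]
    [Module (Corner e' he') N] (hcN : Compat e' e'' he' hsum hA N)
    [AddCommGroup X] [Module Λ X] (h : IsSyz Λ n N X) :
    ∃ instX : Module (Corner e' he') X,
      (@Compat Λ _ e' e'' he' hsum hA X _ _ instX) ∧
      (@IsSyz (Corner e' he') _ n N _ _ X _ instX) := by
  obtain ⟨M, instG, instM, h0, hl, hstep⟩ := h
  have hgood : ∀ i, ∀ m : M i, e'' • m = 0 := by
    intro i
    induction i using Fin.induction with
    | zero => exact good_of_equiv e'' h0.some.symm (compat_good e' e'' he' hsum hA hcN)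
    | succ i ih => exact isSyz1_good e' e'' he' he'' hsum hA K ih (hstep i)
  letI instM' : ∀ i, Module (Corner e' he') (M i) :=
    fun i => goodModule e' e'' he' hsum (hgood i)
  have hcM : ∀ i, Compat e' e'' he' hsum hA (M i) :=
    fun i => goodModule_compat e' e'' he' hsum hA (hgood i)
  have hgX : ∀ x : X, e'' • x = 0 := good_of_equiv e'' hl.some (hgood _)
  refine ⟨goodModule e' e'' he' hsum hgX, goodModule_compat e' e'' he' hsum hA hgX, ?_⟩
  letI instX' : Module (Corner e' he') X := goodModule e' e'' he' hsum hgX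
  have hcX : Compat e' e'' he' hsum hA X := goodModule_compat e' e'' he' hsum hA hgX
  exact ⟨M, instG, instM',
    ⟨toCornerEquiv e' e'' he' hsum hA (hcM 0) hcN h0.some⟩,
    ⟨toCornerEquiv e' e'' he' hsum hA (hcM _) hcX hl.some⟩,
    fun i => isSyz1_to_corner e' e'' he' he'' hsum hA K (hcM _) (hcM _) (hstep i)⟩

end SyzygyTransfer

/-- Proposition 5(1). Under condition (a), `pd_Λ e'N = pd_{Λ'} e'N`
for every left `Λ`-module `N`. -/
theorem corner_pdim_eq
    (K : Type) [Field K] (Λ : Type) [Ring Λ] [Algebra K Λ] [FiniteDimensional K Λ]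
    (ι : Type) [Fintype ι] [DecidableEq ι] (e : ι → Λ)
    (hco : CompleteOrthogonalIdempotents e) (hprim : ∀ i, IsPrimitiveIdem Λ (e i))
    (S : Finset ι) (hS : S.Nonempty) (hS' : Sᶜ.Nonempty)
    (e' e'' : Λ) (hd' : e' = ∑ i ∈ S, e i) (hd'' : e'' = ∑ i ∈ Sᶜ, e i)
    (he' : IsIdempotentElem e') (he'' : IsIdempotentElem e'') (hsum : e' + e'' = 1)
    -- condition (a) : e''Λe' = 0
    (hA : ∀ x : Λ, e'' * x * e' = 0)
    (N : Type) (_ : AddCommGroup N) (_ : Module Λ N) :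
    (let _ : Module Λ (Cpt e' N) := Module.compHom (Cpt e' N) (cornerHom e' e'' he' hsum hA)
     pdim Λ (Cpt e' N)) = pdim (Corner e' he') (Cpt e' N) := by
  letI instN : Module Λ (Cpt e' N) := Module.compHom (Cpt e' N) (cornerHom e' e'' he' hsum hA)
  show pdim Λ (Cpt e' N) = pdim (Corner e' he') (Cpt e' N)
  have hcN : Compat e' e'' he' hsum hA (Cpt e' N) := fun a m => rfl
  unfold pdim
  congr 1
  ext d
  simp only [Set.mem_setOf_eq]
  constructor
  · rintro ⟨n, rfl, X, instXA, instXM, hsyz, hproj⟩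
    obtain ⟨instX', hcX, hsyz'⟩ := isSyz_to_corner e' e'' he' he'' hsum hA K n hcN hsyz
    exact ⟨n, rfl, X, instXA, instX', hsyz',
      corner_of_projective e' e'' he' hsum hA hcX hproj⟩
  · rintro ⟨n, rfl, X, instXA, instX', hsyz, hproj⟩
    letI instX : Module Λ X := Module.compHom X (cornerHom e' e'' he' hsum hA)
    have hcX : Compat e' e'' he' hsum hA X := fun a m => rfl
    exact ⟨n, rfl, X, instXA, instX,
      isSyz_of_corner e' e'' he' hsum hA n hcN hcX hsyz,
      projective_of_corner e' e'' he' hsum hA hcX hproj⟩
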